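/- Let m, N be integers with 1 ≤ m < N, let M > 0, C > 0, and let h : ℝ → ℂ be measurable with |h(x)| ≤ M for all x and |h(x) − h(0)| ≤ C |x|^{2N} for all x ∈ ℝ. Then for each ε > 0 the integral I(ε) = ∫_{−∞}^{+∞} y^{−2m} e^{−2 y^{2N}} ( h(ε y) − h(0) ) dy converges absolutely, and lim_{ε→0⁺} I(ε) = 0. -/

import Mathlib

open Filter MeasureTheory

theorem aux_int_stmt6 (m N : ℕ) (hmN : m < N) :
    Integrable (fun y : ℝ => |y| ^ (2*(N-m)) * Real.exp (-2 * y ^ (2*N))) := by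
  have hN : 1 ≤ (2*N : ℝ) := by
    have : (1:ℝ) ≤ N := by exact_mod_cast Nat.one_le_iff_ne_zero.mpr (by omega)
    nlinarith
  have hpos : IntegrableOn (fun y : ℝ => |y| ^ (2*(N-m)) * Real.exp (-2 * y ^ (2*N)))
      (Set.Ioi 0) := by
    have H := integrableOn_rpow_mul_exp_neg_mul_rpow (p := (2*N : ℝ)) (s := ((2*(N-m) : ℕ) : ℝ))
      (b := 2) (lt_of_lt_of_le (by norm_num) (Nat.cast_nonneg _)) (by linarith) (by norm_num)
    apply H.congr_fun ?_ measurableSet_Ioi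
    intro x hx
    have hx0 : (0:ℝ) < x := hx
    show x ^ ((2*(N-m):ℕ):ℝ) * Real.exp (-2 * x ^ (2*(N:ℝ)))
        = |x| ^ (2*(N-m)) * Real.exp (-2 * x ^ (2*N))
    rw [abs_of_pos hx0, Real.rpow_natCast,
      show (2*(N:ℝ)) = ((2*N:ℕ):ℝ) by push_cast; ring, Real.rpow_natCast]
  have heven : ∀ y : ℝ, (fun y : ℝ => |y| ^ (2*(N-m)) * Real.exp (-2 * y ^ (2*N))) (-y)
      = (fun y : ℝ => |y| ^ (2*(N-m)) * Real.exp (-2 * y ^ (2*N))) y := by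
    intro y
    simp [abs_neg, Even.neg_pow (by exact even_two_mul N)]
  rw [← integrableOn_univ, show (Set.univ : Set ℝ) = Set.Iio 0 ∪ Set.Ici 0 from
      (Set.Iio_union_Ici).symm, integrableOn_union, integrableOn_Ici_iff_integrableOn_Ioi]
  refine ⟨?_, hpos⟩
  rw [← (Measure.measurePreserving_neg (volume : Measure ℝ)).integrableOn_comp_preimage
      (Homeomorph.neg ℝ).measurableEmbedding]
  simp only [Function.comp_def, heven, Set.neg_preimage, Set.neg_Iio, neg_zero]
  exact hpos

theorem stmt_6 (m N : ℕ) (hm : 1 ≤ m) (hmN : m < N) (M C : ℝ) (hM : 0 < M) (hC : 0 < C)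
    (h : ℝ → ℂ) (hmeas : Measurable h)
    (hbd : ∀ x : ℝ, ‖h x‖ ≤ M)
    (hlip : ∀ x : ℝ, ‖h x - h 0‖ ≤ C * |x| ^ (2 * N)) :
    (∀ ε : ℝ, 0 < ε → Integrable (fun y : ℝ =>
        ((y ^ (-(2 * (m : ℤ))) : ℝ) : ℂ) * ((Real.exp (-2 * y ^ (2 * N)) : ℝ) : ℂ)
          * (h (ε * y) - h 0))) ∧
    Tendsto (fun ε : ℝ => ∫ y : ℝ,
        ((y ^ (-(2 * (m : ℤ))) : ℝ) : ℂ) * ((Real.exp (-2 * y ^ (2 * N)) : ℝ) : ℂ)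
          * (h (ε * y) - h 0))
      (nhdsWithin 0 (Set.Ioi 0)) (nhds 0) := by
  set g : ℝ → ℝ := fun y : ℝ => |y| ^ (2*(N-m)) * Real.exp (-2 * y ^ (2*N)) with hg
  have hgint : Integrable g := aux_int_stmt6 m N hmN
  set f : ℝ → ℝ → ℂ := fun ε y =>
      ((y ^ (-(2 * (m : ℤ))) : ℝ) : ℂ) * ((Real.exp (-2 * y ^ (2 * N)) : ℝ) : ℂ)
          * (h (ε * y) - h 0) with hf
  -- pointwise bound
  have hbound : ∀ ε y : ℝ, ‖f ε y‖ ≤ (C * ε ^ (2*N)) * g y := by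
    intro ε y
    have hnorm : ‖f ε y‖ = |y ^ (-(2 * (m : ℤ)))| * Real.exp (-2 * y ^ (2*N))
        * ‖h (ε * y) - h 0‖ := by
      rw [hf]
      simp only [norm_mul, Complex.norm_real, Real.norm_eq_abs, Real.abs_exp]
    by_cases hy : y = 0
    · subst hy
      rw [hnorm]
      rw [zero_zpow _ (by omega), abs_zero, zero_mul, zero_mul]
      have : g 0 = 0 := by
        simp [hg, zero_pow (show 2*(N-m) ≠ 0 by omega)]
      rw [this, mul_zero]
    · have hay : (0:ℝ) < |y| := abs_pos.mpr hy
      have h1 : ‖f ε y‖ ≤ |y| ^ (-(2 * (m : ℤ))) * Real.exp (-2 * y ^ (2*N))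
          * (C * (|ε| * |y|) ^ (2*N)) := by
        rw [hnorm, show |y ^ (-(2 * (m:ℤ)))| = |y| ^ (-(2 * (m:ℤ))) from
          map_zpow₀ (AbsoluteValue.abs : AbsoluteValue ℝ ℝ) y _]
        have := hlip (ε * y)
        rw [abs_mul] at this
        have hpos : (0:ℝ) ≤ |y| ^ (-(2 * (m : ℤ))) * Real.exp (-2 * y ^ (2*N)) := by
          positivity
        exact mul_le_mul_of_nonneg_left this hpos
      refine h1.trans (le_of_eq ?_)
      have h2 : |y| ^ (2*(N-m)) = |y| ^ (-(2 * (m : ℤ))) * |y| ^ (2*N) := by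
        rw [← zpow_natCast |y| (2*(N-m)), ← zpow_natCast |y| (2*N),
          ← zpow_add₀ (ne_of_gt hay)]
        congr 1
        push_cast
        omega
      have h3 : |ε| ^ (2*N) = ε ^ (2*N) := Even.pow_abs (even_two_mul N) ε
      show |y| ^ (-(2 * (m : ℤ))) * Real.exp (-2 * y ^ (2*N)) * (C * (|ε| * |y|) ^ (2*N))
          = C * ε ^ (2*N) * (|y| ^ (2*(N-m)) * Real.exp (-2 * y ^ (2*N)))
      rw [h2, mul_pow, h3]
      ring
  -- measurability
  have hfmeas : ∀ ε : ℝ, Measurable (f ε) := by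
    intro ε
    have hz : Measurable fun y : ℝ => y ^ (-(2 * (m : ℤ))) := by
      have : (fun y : ℝ => y ^ (-(2 * (m : ℤ)))) = fun y : ℝ => (y ^ (2*m))⁻¹ := by
        funext y
        rw [show (-(2 * (m : ℤ))) = -((2*m : ℕ) : ℤ) by push_cast; ring, zpow_neg,
          zpow_natCast]
      rw [this]
      exact (measurable_id.pow_const _).inv
    exact ((Complex.measurable_ofReal.comp hz).mul (Complex.measurable_ofReal.comp
      (((measurable_id.pow_const (2*N)).const_mul (-2)).exp))).mul
      ((hmeas.comp (measurable_id.const_mul ε)).sub measurable_const)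
  have hint : ∀ ε : ℝ, Integrable (f ε) := by
    intro ε
    exact Integrable.mono' (hgint.const_mul (C * ε ^ (2*N)))
      (hfmeas ε).aestronglyMeasurable (ae_of_all _ (hbound ε))
  refine ⟨fun ε _ => hint ε, ?_⟩
  -- norm of the integral bound
  have hK : ∀ ε : ℝ, ‖∫ y : ℝ, f ε y‖ ≤ (C * ε ^ (2*N)) * ∫ y : ℝ, g y := by
    intro ε
    have := norm_integral_le_of_norm_le (f := f ε) (g := fun y => (C * ε ^ (2*N)) * g y)
      (hgint.const_mul _) (ae_of_all _ (hbound ε))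
    rwa [integral_const_mul] at this
  rw [show (nhds (0:ℂ)) = nhds 0 from rfl, tendsto_zero_iff_norm_tendsto_zero]
  refine squeeze_zero (fun ε => norm_nonneg _) hK ?_
  have : Tendsto (fun ε : ℝ => (C * ε ^ (2*N)) * ∫ y : ℝ, g y) (nhds 0) (nhds 0) := by
    have hcont : Continuous fun ε : ℝ => (C * ε ^ (2*N)) * ∫ y : ℝ, g y := by
      continuity
    have := hcont.tendsto 0
    simpa [zero_pow (show 2*N ≠ 0 by omega)] using this
  exact this.mono_left nhdsWithin_le_nhds
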